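/- Let G be a finite elementary abelian 2-group, i.e. G ≅ (Z/2)^k with k ≥ 2, and let I = G (the set consisting of 0 together with all 2^k − 1 involutions). Then for every r with 0 ≤ r ≤ 2^k and r ∉ {2, 2^k − 2}, there exists a subset R ⊆ I with |R| = r and ∑_{i∈R} i = 0. -/

import Mathlib

private lemma zmod2_addself {m : ℕ} (x : Fin m → ZMod 2) : x + x = 0 := by
  funext i
  simp only [Pi.add_apply, Pi.zero_apply]
  have h : ∀ a : ZMod 2, a + a = 0 := by decide
  exact h (x i)

private lemma cancel2 {m : ℕ} {a b : Fin m → ZMod 2} (h : a + b = 0) : a = b := by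
  have := zmod2_addself b
  calc a = a + (b + b) := by rw [this, add_zero]
  _ = (a + b) + b := by ring
  _ = b := by rw [h, zero_add]

private lemma even_nsmul {t : ℕ} {m : ℕ} (x : Fin m → ZMod 2) : (2 * t) • x = 0 := by
  rw [mul_smul, two_nsmul, zmod2_addself]

private lemma snoc_add {m : ℕ} (v w : Fin m → ZMod 2) (a b : ZMod 2) :
    (Fin.snoc v a + Fin.snoc w b : Fin (m+1) → ZMod 2) = Fin.snoc (v + w) (a + b) := by
  funext i
  refine Fin.lastCases ?_ (fun j => ?_) i <;>
    simp [Pi.add_apply, Fin.snoc_last, Fin.snoc_castSucc]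

private def Eh (m : ℕ) : (Fin m → ZMod 2) →+ (Fin (m+1) → ZMod 2) where
  toFun v := Fin.snoc v 0
  map_zero' := by
    funext i
    refine Fin.lastCases ?_ (fun j => ?_) i <;> simp [Fin.snoc_last, Fin.snoc_castSucc]
  map_add' v w := by rw [snoc_add]; norm_num

private lemma Eh_inj (m : ℕ) : Function.Injective (Eh m) := by
  intro v w h
  have := congrArg Fin.init h
  simpa [Eh, Fin.init_snoc] using this

private def Ee (m : ℕ) : (Fin m → ZMod 2) ↪ (Fin (m+1) → ZMod 2) := ⟨Eh m, Eh_inj m⟩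

private lemma cardV (m : ℕ) : Fintype.card (Fin m → ZMod 2) = 2 ^ m := by
  simp [Fintype.card_fun]

private lemma sum_mapE {m : ℕ} (R : Finset (Fin m → ZMod 2)) :
    ∑ i ∈ R.map (Ee m), i = (Eh m) (∑ i ∈ R, i) := by
  rw [Finset.sum_map]
  exact (map_sum (Eh m) id R).symm

private lemma snoc1_not_mem {m : ℕ} (R : Finset (Fin m → ZMod 2)) (w : Fin m → ZMod 2) :
    Fin.snoc w (1 : ZMod 2) ∉ R.map (Ee m) := by
  intro h
  obtain ⟨v, -, hv⟩ := Finset.mem_map.1 h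
  have := congrFun hv (Fin.last m)
  simp [Ee, Eh, Fin.snoc_last] at this

private lemma snoc1_inj {m : ℕ} {w w' : Fin m → ZMod 2}
    (h : (Fin.snoc w (1 : ZMod 2) : Fin (m+1) → ZMod 2) = Fin.snoc w' (1 : ZMod 2)) : w = w' := by
  have := congrArg Fin.init h
  simpa [Fin.init_snoc] using this

private lemma eq_snoc_self {m : ℕ} (x : Fin (m+1) → ZMod 2) :
    Fin.snoc (Fin.init x) (x (Fin.last m)) = x := Fin.snoc_init_self x

private def E1e (m : ℕ) : (Fin m → ZMod 2) ↪ (Fin (m+1) → ZMod 2) :=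
  ⟨fun v => (Fin.snoc v 1 : Fin (m+1) → ZMod 2), by
    intro v w h
    have := congrArg Fin.init h
    simpa [Fin.init_snoc] using this⟩

private lemma sum_univ_zero (m : ℕ) (hm : 2 ≤ m) :
    ∑ v : Fin m → ZMod 2, v = 0 := by
  obtain ⟨t, rfl⟩ : ∃ t, m = t + 1 := ⟨m - 1, by omega⟩
  have hdisj : Disjoint (Finset.univ.map (Ee t)) (Finset.univ.map (E1e t)) := by
    rw [Finset.disjoint_left]
    intro x hx hx'
    obtain ⟨v, -, hv⟩ := Finset.mem_map.1 hx
    obtain ⟨w, -, hw⟩ := Finset.mem_map.1 hx'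
    have := congrFun (hv.trans hw.symm) (Fin.last t)
    simp [Ee, Eh, E1e, Fin.snoc_last] at this
    exact absurd this (by change ¬ (0 : ZMod 2) = (Fin.snoc w (1 : ZMod 2) : Fin (t+1) → ZMod 2) (Fin.last t); simp)
  have hcover : (Finset.univ : Finset (Fin (t+1) → ZMod 2)) =
      (Finset.univ.map (Ee t)) ∪ (Finset.univ.map (E1e t)) := by
    refine (Finset.eq_univ_iff_forall.2 ?_).symm
    intro x
    have h01 : ∀ a : ZMod 2, a = 0 ∨ a = 1 := by decide
    rcases h01 (x (Fin.last t)) with h | h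
    · refine Finset.mem_union_left _ (Finset.mem_map.2 ⟨Fin.init x, Finset.mem_univ _, ?_⟩)
      show (Fin.snoc (Fin.init x) 0 : Fin (t+1) → ZMod 2) = x
      rw [← h]
      exact eq_snoc_self x
    · refine Finset.mem_union_right _ (Finset.mem_map.2 ⟨Fin.init x, Finset.mem_univ _, ?_⟩)
      show (Fin.snoc (Fin.init x) 1 : Fin (t+1) → ZMod 2) = x
      rw [← h]
      exact eq_snoc_self x
  have hs1 : ∑ v : Fin t → ZMod 2, (Fin.snoc v 1 : Fin (t+1) → ZMod 2)
      = (Eh t) (∑ v : Fin t → ZMod 2, v) + (2^t) • (Fin.snoc 0 1 : Fin (t+1) → ZMod 2) := by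
    have hterm : ∀ v : Fin t → ZMod 2,
        (Fin.snoc v 1 : Fin (t+1) → ZMod 2) = (Eh t) v + (Fin.snoc 0 1 : Fin (t+1) → ZMod 2) := by
      intro v
      show _ = (Fin.snoc v 0 : Fin (t+1) → ZMod 2) + _
      rw [snoc_add]
      norm_num
    rw [Finset.sum_congr rfl (fun v _ => hterm v), Finset.sum_add_distrib,
      Finset.sum_const, ← map_sum (Eh t) (fun x => x) Finset.univ]
    simp [cardV]
  have h2t : 2 ^ t = 2 * 2 ^ (t - 1) := by
    obtain ⟨u, rfl⟩ : ∃ u, t = u + 1 := ⟨t - 1, by omega⟩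
    rw [pow_succ]
    simp [Nat.add_sub_cancel]
    ring
  calc ∑ v : Fin (t+1) → ZMod 2, v
      = ∑ v ∈ (Finset.univ.map (Ee t)) ∪ (Finset.univ.map (E1e t)), v := by rw [← hcover]
    _ = (∑ v ∈ Finset.univ.map (Ee t), v) + ∑ v ∈ Finset.univ.map (E1e t), v :=
        Finset.sum_union hdisj
    _ = (Eh t) (∑ v : Fin t → ZMod 2, v) +
        ((Eh t) (∑ v : Fin t → ZMod 2, v) + (2^t) • (Fin.snoc 0 1 : Fin (t+1) → ZMod 2)) := by
        rw [sum_mapE]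
        congr 1
        rw [← hs1]
        rw [Finset.sum_map]
        rfl
    _ = 0 := by
        rw [← add_assoc, zmod2_addself, zero_add, h2t, even_nsmul]

private lemma Eh_apply {m : ℕ} (v : Fin m → ZMod 2) :
    (Eh m) v = (Fin.snoc v 0 : Fin (m+1) → ZMod 2) := rfl

private lemma compl_lemma {m : ℕ} (hm : 2 ≤ m) (R : Finset (Fin m → ZMod 2))
    (s : Fin m → ZMod 2) (hsum : ∑ i ∈ R, i = s) :
    (Finset.univ \ R).card = 2^m - R.card ∧ ∑ i ∈ Finset.univ \ R, i = s := by
  constructor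
  · rw [Finset.card_sdiff_of_subset (Finset.subset_univ R), Finset.card_univ, cardV]
  · have h := Finset.sum_sdiff (f := fun i => i) (Finset.subset_univ R)
    rw [hsum, sum_univ_zero m hm] at h
    exact cancel2 h

private lemma exists_ne_ne {m : ℕ} (hm : 2 ≤ m) (a b : Fin m → ZMod 2) :
    ∃ u : Fin m → ZMod 2, u ≠ a ∧ u ≠ b := by
  by_contra hcon
  push_neg at hcon
  have hsub : (Finset.univ : Finset (Fin m → ZMod 2)) ⊆ {a, b} := by
    intro u _
    rcases eq_or_ne u a with h' | h'
    · simp [h']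
    · simp [hcon u h']
  have h1 := Finset.card_le_card hsub
  have h2 : ({a, b} : Finset (Fin m → ZMod 2)).card ≤ 2 :=
    (Finset.card_insert_le _ _).trans (by simp)
  have h3 : 4 ≤ Fintype.card (Fin m → ZMod 2) := by
    rw [cardV]
    calc (4:ℕ) = 2^2 := rfl
    _ ≤ 2^m := Nat.pow_le_pow_right (by norm_num) hm
  rw [Finset.card_univ] at h1
  omega

private lemma main (k : ℕ) (hk : 2 ≤ k) :
    (∀ r, r ≤ 2^k → r ≠ 2 → r ≠ 2^k - 2 →
      ∃ R : Finset (Fin k → ZMod 2), R.card = r ∧ ∑ i ∈ R, i = 0) ∧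
    (∀ r, 1 ≤ r → r ≤ 2^k - 1 → ∀ s : Fin k → ZMod 2, s ≠ 0 →
      ∃ R : Finset (Fin k → ZMod 2), R.card = r ∧ ∑ i ∈ R, i = s) := by
  induction k, hk using Nat.le_induction with
  | base =>
    constructor
    · norm_num
      decide
    · norm_num
      decide
  | succ k hk IH =>
    obtain ⟨A, B⟩ := IH
    have hn4 : 4 ≤ 2^k := by
      calc (4:ℕ) = 2^2 := rfl
      _ ≤ 2^k := Nat.pow_le_pow_right (by norm_num) hk
    have hN : 2^(k+1) = 2 * 2^k := by rw [pow_succ]; ring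
    have pair_sum : ∀ t : Fin k → ZMod 2,
        (Fin.snoc (0 : Fin k → ZMod 2) (1 : ZMod 2) + Fin.snoc t 1 : Fin (k+1) → ZMod 2)
          = (Eh k) t := by
      intro t
      have h11 : (1 + 1 : ZMod 2) = 0 := by decide
      rw [snoc_add, zero_add, h11, Eh_apply]
    have buildPair : ∀ (R' : Finset (Fin k → ZMod 2)) (u t : Fin k → ZMod 2), t ≠ 0 →
        (∑ i ∈ R', i = u) →
        ∃ R : Finset (Fin (k+1) → ZMod 2), R.card = R'.card + 2 ∧
          ∑ i ∈ R, i = (Eh k) (u + t) := by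
      intro R' u t ht hu
      have hne : (Fin.snoc (0 : Fin k → ZMod 2) (1 : ZMod 2) : Fin (k+1) → ZMod 2)
          ≠ Fin.snoc t 1 := fun h => ht (snoc1_inj h).symm
      have hdisj : Disjoint (R'.map (Ee k))
          ({Fin.snoc (0 : Fin k → ZMod 2) (1 : ZMod 2), Fin.snoc t 1} :
            Finset (Fin (k+1) → ZMod 2)) := by
        rw [Finset.disjoint_right]
        intro x hx
        rcases Finset.mem_insert.1 hx with h | h
        · rw [h]; exact snoc1_not_mem _ _
        · rw [Finset.mem_singleton.1 h]; exact snoc1_not_mem _ _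
      refine ⟨(R'.map (Ee k)) ∪ {Fin.snoc (0 : Fin k → ZMod 2) (1 : ZMod 2), Fin.snoc t 1},
        ?_, ?_⟩
      · rw [Finset.card_union_of_disjoint hdisj, Finset.card_map, Finset.card_pair hne]
      · rw [Finset.sum_union hdisj, sum_mapE, hu, Finset.sum_pair hne, pair_sum, ← map_add]
    have buildSingle : ∀ (R' : Finset (Fin k → ZMod 2)) (u w : Fin k → ZMod 2),
        (∑ i ∈ R', i = u) →
        ∃ R : Finset (Fin (k+1) → ZMod 2), R.card = R'.card + 1 ∧
          ∑ i ∈ R, i = Fin.snoc (u + w) 1 := by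
      intro R' u w hu
      have hnm := snoc1_not_mem R' w
      refine ⟨insert (Fin.snoc w 1) (R'.map (Ee k)), ?_, ?_⟩
      · rw [Finset.card_insert_of_notMem hnm, Finset.card_map]
      · rw [Finset.sum_insert hnm, sum_mapE, hu, Eh_apply]
        have h1 : (Fin.snoc w 1 + Fin.snoc u 0 : Fin (k+1) → ZMod 2)
            = Fin.snoc (w + u) (1 + 0) := snoc_add w u 1 0
        rw [h1, add_comm w u]
        norm_num
    have key : ∀ m, m ≤ 2^k → m ≠ 2 →
        ∃ R : Finset (Fin (k+1) → ZMod 2), R.card = m ∧ ∑ i ∈ R, i = 0 := by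
      intro m hm hm2
      by_cases hme : m = 2^k - 2
      · have h8 : 8 ≤ 2^k := by
          rcases Nat.lt_or_ge k 3 with h | h
          · have hk2 : k = 2 := by omega
            subst hk2
            norm_num at hme
            exact absurd hme hm2
          · calc (8:ℕ) = 2^3 := rfl
            _ ≤ 2^k := Nat.pow_le_pow_right (by norm_num) h
        obtain ⟨u, hu0, -⟩ := exists_ne_ne hk 0 0
        obtain ⟨R', hc, hs⟩ := B (2^k - 4) (by omega) (by omega) u hu0
        obtain ⟨R, hcR, hsR⟩ := buildPair R' u u hu0 hs
        refine ⟨R, by omega, ?_⟩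
        rw [hsR, zmod2_addself, map_zero]
      · obtain ⟨R', hc, hs⟩ := A m hm hm2 hme
        exact ⟨R'.map (Ee k), by rw [Finset.card_map, hc],
          by rw [sum_mapE, hs, map_zero]⟩
    have small : ∀ m, 1 ≤ m → m ≤ 2^k → ∀ s : Fin (k+1) → ZMod 2, s ≠ 0 →
        ∃ R : Finset (Fin (k+1) → ZMod 2), R.card = m ∧ ∑ i ∈ R, i = s := by
      intro m hm1 hm s hs0
      rcases eq_or_lt_of_le hm1 with h1 | h1
      · exact ⟨{s}, by simp [← h1], by simp⟩
      · have h01 : ∀ a : ZMod 2, a = 0 ∨ a = 1 := by decide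
        have hsnoc := eq_snoc_self s
        rcases h01 (s (Fin.last k)) with hl | hl
        · -- s ∈ H
          rw [hl] at hsnoc
          have hs' : Fin.init s ≠ 0 := by
            intro h0
            rw [h0] at hsnoc
            apply hs0
            rw [← hsnoc, ← Eh_apply, map_zero]
          rcases Nat.lt_or_ge m (2^k) with hmlt | hmge
          · obtain ⟨R', hc, hs⟩ := B m (by omega) (by omega) (Fin.init s) hs'
            refine ⟨R'.map (Ee k), by rw [Finset.card_map, hc], ?_⟩
            rw [sum_mapE, hs, Eh_apply, hsnoc]
          · have hmeq : m = 2^k := by omega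
            obtain ⟨u, hu0, hus⟩ := exists_ne_ne hk 0 (Fin.init s)
            have ht : u + Fin.init s ≠ 0 := fun h => hus (cancel2 h)
            obtain ⟨R', hc, hs⟩ := B (2^k - 2) (by omega) (by omega) u hu0
            obtain ⟨R, hcR, hsR⟩ := buildPair R' u (u + Fin.init s) ht hs
            refine ⟨R, by omega, ?_⟩
            rw [hsR, ← add_assoc, zmod2_addself, zero_add, Eh_apply, hsnoc]
        · -- s ∉ H
          rw [hl] at hsnoc
          obtain ⟨u, hu0, -⟩ := exists_ne_ne hk 0 0
          obtain ⟨R', hc, hs⟩ := B (m - 1) (by omega) (by omega) u hu0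
          obtain ⟨R, hcR, hsR⟩ := buildSingle R' u (u + Fin.init s) hs
          refine ⟨R, by omega, ?_⟩
          rw [hsR, ← add_assoc, zmod2_addself, zero_add, hsnoc]
    constructor
    · intro r hr hr2 hr2'
      rcases le_or_gt r (2^k) with h | h
      · exact key r h hr2
      · obtain ⟨R, hc, hs⟩ := key (2^(k+1) - r) (by omega) (by omega)
        obtain ⟨hc', hs'⟩ := compl_lemma (by omega) R 0 hs
        exact ⟨Finset.univ \ R, by omega, hs'⟩
    · intro r hr1 hr s hs0
      rcases le_or_gt r (2^k) with h | h
      · exact small r hr1 h s hs0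
      · obtain ⟨R, hc, hs⟩ := small (2^(k+1) - r) (by omega) (by omega) s hs0
        obtain ⟨hc', hs'⟩ := compl_lemma (by omega) R s hs
        exact ⟨Finset.univ \ R, by omega, hs'⟩

/-- In an elementary abelian 2-group `G` of order `2^k`, `k ≥ 2`,
for every `r ≤ 2^k` with `r ∉ {2, 2^k - 2}` there is a subset `R ⊆ G` of
cardinality `r` summing to `0`. -/
theorem stmt0 (G : Type*) [AddCommGroup G] [Fintype G]
    (h2 : ∀ x : G, x + x = 0) (k : ℕ) (hk : 2 ≤ k)
    (hcard : Fintype.card G = 2 ^ k)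
    (r : ℕ) (hr : r ≤ 2 ^ k) (hr2 : r ≠ 2) (hr2' : r ≠ 2 ^ k - 2) :
    ∃ R : Finset G, R.card = r ∧ ∑ i ∈ R, i = 0 := by
  classical
  letI : Module (ZMod 2) G := AddCommGroup.zmodModule (n := 2) (by
    intro x; rw [two_nsmul]; exact h2 x)
  haveI : Module.Finite (ZMod 2) G := Module.Finite.of_finite
  have hfr : Module.finrank (ZMod 2) G = k := by
    have h := Module.card_eq_pow_finrank (K := ZMod 2) (V := G)
    rw [hcard, ZMod.card] at h
    exact (Nat.pow_right_injective le_rfl h.symm)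
  let b := Module.finBasisOfFinrankEq (ZMod 2) G hfr
  let ψ := b.equivFun.symm
  let φ : (Fin k → ZMod 2) →+ G := ψ.toLinearMap.toAddMonoidHom
  obtain ⟨R, hc, hs⟩ := (main k hk).1 r hr hr2 hr2'
  refine ⟨R.map ⟨φ, ψ.injective⟩, ?_, ?_⟩
  · rw [Finset.card_map, hc]
  · rw [Finset.sum_map]
    show ∑ i ∈ R, φ i = 0
    rw [← map_sum φ (fun x => x) R, hs, map_zero]
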